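/- Consider the two-vertex graph with vertices v₀, v₁ and edges: self-loop on v₀ with weight (1,-1), self-loop on v₁ with weight (-1,1), edge v₀→v₁ with weight (0,-1), edge v₁→v₀ with weight (0,-1). Then there exists an infinite path ρ from v₀ (not eventually periodic) such that w₁(ρ[0,k]) ≥ 0 for all k and liminf_{k→∞} w₂(ρ[0,k])/k ≥ 0. In particular, the path that at round Z (for Z = 1, 2, 3, …) loops Z times on v₀, moves to v₁, loops Z times on v₁, and returns to v₀ has these properties. -/

import Mathlib

open Finset Filter

namespace InfMemAux

/-- start index of round `Z` (rounds are numbered from 1). -/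
def S (Z : ℕ) : ℕ := (Z - 1) * (Z + 2)

def stepP : ℕ × ℕ → ℕ × ℕ :=
  fun zr => if zr.2 < 2 * zr.1 + 1 then (zr.1, zr.2 + 1) else (zr.1 + 1, 0)

def pos : ℕ → ℕ × ℕ
  | 0 => (1, 0)
  | k + 1 => stepP (pos k)

def rho (k : ℕ) : Bool := decide ((pos k).1 + 1 ≤ (pos k).2)

lemma S_succ (Z : ℕ) (hZ : 1 ≤ Z) : S (Z + 1) = S Z + 2 * Z + 2 := by
  cases Z with
  | zero => omega
  | succ m => simp [S]; ring

lemma S_mono {Z Z' : ℕ} (h : Z ≤ Z') : S Z ≤ S Z' :=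
  Nat.mul_le_mul (Nat.sub_le_sub_right h 1) (by omega)

lemma posS : ∀ Z r, r ≤ 2 * (Z + 1) + 1 → pos (S (Z + 1) + r) = (Z + 1, r) := by
  intro Z
  induction Z with
  | zero =>
    intro r
    induction r with
    | zero => intro _; simp [S, pos]
    | succ s ihs =>
      intro hs
      have h1 := ihs (by omega)
      show stepP (pos (S 1 + s)) = (1, s + 1)
      rw [h1, stepP]
      simp only []
      rw [if_pos (by omega)]
  | succ m ih =>
    intro r
    induction r with
    | zero =>
      intro _
      have hS : S (m + 2) = S (m + 1) + 2 * (m + 1) + 2 := S_succ (m + 1) (by omega)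
      have h1 := ih (2 * (m + 1) + 1) (le_refl _)
      have : S (m + 2) + 0 = (S (m + 1) + (2 * (m + 1) + 1)) + 1 := by omega
      rw [this]
      show stepP (pos (S (m + 1) + (2 * (m + 1) + 1))) = (m + 2, 0)
      rw [h1, stepP]
      simp only []
      rw [if_neg (by omega)]
    | succ s ihs =>
      intro hs
      have h1 := ihs (by omega)
      show stepP (pos (S (m + 2) + s)) = (m + 2, s + 1)
      rw [h1, stepP]
      simp only []
      rw [if_pos (by omega)]

lemma posS' (Z : ℕ) (hZ : 1 ≤ Z) (r : ℕ) (hr : r ≤ 2 * Z + 1) :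
    pos (S Z + r) = (Z, r) := by
  obtain ⟨m, rfl⟩ : ∃ m, Z = m + 1 := ⟨Z - 1, by omega⟩
  exact posS m r hr

lemma exists_decomp : ∀ k, ∃ Z r, k = S (Z + 1) + r ∧ r ≤ 2 * (Z + 1) + 1 := by
  intro k
  induction k with
  | zero => exact ⟨0, 0, by simp [S], by omega⟩
  | succ k ih =>
    obtain ⟨Z, r, hk, hr⟩ := ih
    rcases eq_or_lt_of_le hr with h | h
    · have hS := S_succ (Z + 1) (by omega)
      exact ⟨Z + 1, 0, by omega, by omega⟩
    · exact ⟨Z, r + 1, by omega, by omega⟩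

lemma rho_spec {k Z r : ℕ} (h : pos k = (Z, r)) : rho k = decide (Z + 1 ≤ r) := by
  simp [rho, h]

def e1 (Z r : ℕ) : ℤ := if r ≤ Z then (r : ℤ) else 2 * (Z : ℤ) + 1 - (r : ℤ)

def e2 (Z r : ℕ) : ℤ :=
  -2 * ((Z : ℤ) - 1) + (if r ≤ Z + 1 then -(r : ℤ) else (r : ℤ) - 2 * (Z : ℤ) - 2)

lemma e1_nonneg (Z r : ℕ) (hr : r ≤ 2 * Z + 1) : 0 ≤ e1 Z r := by
  simp only [e1]; split_ifs <;> omega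

lemma e2_ge (Z r : ℕ) : -3 * (Z : ℤ) - 1 ≤ e2 Z r := by
  simp only [e2]; split_ifs <;> omega


section Sums

variable {w₁ w₂ : Bool → Bool → ℤ}

/-- One step inside a round. -/
lemma sums_step (h00 : w₁ false false = 1 ∧ w₂ false false = -1)
    (h11 : w₁ true true = -1 ∧ w₂ true true = 1)
    (h01 : w₁ false true = 0 ∧ w₂ false true = -1) (Z : ℕ) (hZ : 1 ≤ Z) (r : ℕ) (hr : r ≤ 2 * Z)
    (ih1 : (∑ i ∈ Finset.range (S Z + r), w₁ (rho i) (rho (i + 1))) = e1 Z r)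
    (ih2 : (∑ i ∈ Finset.range (S Z + r), w₂ (rho i) (rho (i + 1))) = e2 Z r) :
    (∑ i ∈ Finset.range (S Z + (r + 1)), w₁ (rho i) (rho (i + 1))) = e1 Z (r + 1) ∧
    (∑ i ∈ Finset.range (S Z + (r + 1)), w₂ (rho i) (rho (i + 1))) = e2 Z (r + 1) := by
  have hk1 : pos (S Z + r) = (Z, r) := posS' Z hZ r (by omega)
  have hk2 : pos (S Z + r + 1) = (Z, r + 1) := posS' Z hZ (r + 1) (by omega)
  have hρ1 : rho (S Z + r) = decide (Z + 1 ≤ r) := rho_spec hk1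
  have hρ2 : rho (S Z + r + 1) = decide (Z + 1 ≤ r + 1) := rho_spec hk2
  have hre : S Z + (r + 1) = (S Z + r) + 1 := rfl
  rw [hre, Finset.sum_range_succ, Finset.sum_range_succ, ih1, ih2]
  rcases lt_trichotomy r Z with h | h | h
  · have b1 : rho (S Z + r) = false := by rw [hρ1]; simp; omega
    have b2 : rho (S Z + r + 1) = false := by rw [hρ2]; simp; omega
    rw [b1, b2, h00.1, h00.2]
    constructor <;> (simp only [e1, e2]; split_ifs <;> omega)
  · have b1 : rho (S Z + r) = false := by rw [hρ1]; simp; omega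
    have b2 : rho (S Z + r + 1) = true := by rw [hρ2]; simp; omega
    rw [b1, b2, h01.1, h01.2]
    constructor <;> (simp only [e1, e2]; split_ifs <;> omega)
  · have b1 : rho (S Z + r) = true := by rw [hρ1]; simp; omega
    have b2 : rho (S Z + r + 1) = true := by rw [hρ2]; simp; omega
    rw [b1, b2, h11.1, h11.2]
    constructor <;> (simp only [e1, e2]; split_ifs <;> omega)

/-- The step from the end of round `Z` to the start of round `Z+1`. -/
lemma sums_cross (h10 : w₁ true false = 0 ∧ w₂ true false = -1) (Z : ℕ) (hZ : 1 ≤ Z)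
    (ih1 : (∑ i ∈ Finset.range (S Z + (2 * Z + 1)), w₁ (rho i) (rho (i + 1))) = e1 Z (2 * Z + 1))
    (ih2 : (∑ i ∈ Finset.range (S Z + (2 * Z + 1)), w₂ (rho i) (rho (i + 1))) = e2 Z (2 * Z + 1)) :
    (∑ i ∈ Finset.range (S (Z + 1) + 0), w₁ (rho i) (rho (i + 1))) = e1 (Z + 1) 0 ∧
    (∑ i ∈ Finset.range (S (Z + 1) + 0), w₂ (rho i) (rho (i + 1))) = e2 (Z + 1) 0 := by
  have hk1 : pos (S Z + (2 * Z + 1)) = (Z, 2 * Z + 1) := posS' Z hZ _ (le_refl _)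
  have hk2 : pos (S (Z + 1)) = (Z + 1, 0) := by
    have := posS' (Z + 1) (by omega) 0 (by omega)
    simpa using this
  have hS : S (Z + 1) = S Z + 2 * Z + 2 := S_succ Z hZ
  have hre : S (Z + 1) + 0 = (S Z + (2 * Z + 1)) + 1 := by omega
  have hre2 : S Z + (2 * Z + 1) + 1 = S (Z + 1) := by omega
  have b1 : rho (S Z + (2 * Z + 1)) = true := by rw [rho_spec hk1]; simp; omega
  have b2 : rho (S Z + (2 * Z + 1) + 1) = false := by
    rw [hre2, rho_spec hk2]; simp
  rw [hre, Finset.sum_range_succ, Finset.sum_range_succ, ih1, ih2, b1, b2, h10.1, h10.2]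
  constructor <;> (simp only [e1, e2]; split_ifs <;> omega)

lemma sums (h00 : w₁ false false = 1 ∧ w₂ false false = -1)
    (h11 : w₁ true true = -1 ∧ w₂ true true = 1)
    (h01 : w₁ false true = 0 ∧ w₂ false true = -1)
    (h10 : w₁ true false = 0 ∧ w₂ true false = -1) : ∀ Z r, r ≤ 2 * (Z + 1) + 1 →
    (∑ i ∈ Finset.range (S (Z + 1) + r), w₁ (rho i) (rho (i + 1))) = e1 (Z + 1) r ∧
    (∑ i ∈ Finset.range (S (Z + 1) + r), w₂ (rho i) (rho (i + 1))) = e2 (Z + 1) r := by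
  intro Z
  induction Z with
  | zero =>
    intro r
    induction r with
    | zero => intro _; constructor <;> simp [S, e1, e2]
    | succ s ihs =>
      intro hs
      obtain ⟨a1, a2⟩ := ihs (by omega)
      exact sums_step h00 h11 h01 1 (by omega) s (by omega) a1 a2
  | succ m ih =>
    intro r
    induction r with
    | zero =>
      intro _
      obtain ⟨a1, a2⟩ := ih (2 * (m + 1) + 1) (le_refl _)
      exact sums_cross h10 (m + 1) (by omega) a1 a2
    | succ s ihs =>
      intro hs
      obtain ⟨a1, a2⟩ := ihs (by omega)
      exact sums_step h00 h11 h01 (m + 2) (by omega) s (by omega) a1 a2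

end Sums

end InfMemAux

open InfMemAux

/-- In the two-vertex graph (`false = v₀`, `true = v₁`) with loop weights
`(1,-1)` on `v₀`, `(-1,1)` on `v₁` and weights `(0,-1)` on both connecting edges,
there exists an infinite path from `v₀`, not eventually periodic, whose
first-coordinate energy never drops below `0` and whose second-coordinate
mean-payoff-inf is `≥ 0`. -/
theorem infinite_memory_win (w₁ w₂ : Bool → Bool → ℤ)
    (h00 : w₁ false false = 1 ∧ w₂ false false = -1)
    (h11 : w₁ true true = -1 ∧ w₂ true true = 1)
    (h01 : w₁ false true = 0 ∧ w₂ false true = -1)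
    (h10 : w₁ true false = 0 ∧ w₂ true false = -1) :
    ∃ ρ : ℕ → Bool, ρ 0 = false ∧
      (∀ k : ℕ, 0 ≤ ∑ i ∈ Finset.range k, w₁ (ρ i) (ρ (i + 1))) ∧
      0 ≤ Filter.atTop.liminf
          (fun k : ℕ => ((∑ i ∈ Finset.range k, w₂ (ρ i) (ρ (i + 1)) : ℤ) : ℝ) / k) ∧
      ¬(∃ p n : ℕ, 1 ≤ n ∧ ∀ k : ℕ, p ≤ k → ρ (k + n) = ρ k) := by
  refine ⟨rho, ?_, ?_, ?_, ?_⟩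
  · simp [rho, pos]
  · -- energy nonnegative
    intro k
    obtain ⟨Z, r, hk, hr⟩ := exists_decomp k
    rw [hk, (sums h00 h11 h01 h10 Z r hr).1]
    exact e1_nonneg (Z + 1) r hr
  · -- liminf ≥ 0
    set u : ℕ → ℝ := fun k => ((∑ i ∈ Finset.range k, w₂ (rho i) (rho (i + 1)) : ℤ) : ℝ) / k
      with hu
    have hub : ∀ k, u k ≤ 1 := by
      intro k
      rcases Nat.eq_zero_or_pos k with hk | hk
      · simp [hu, hk]
      · have hb : (∑ i ∈ Finset.range k, w₂ (rho i) (rho (i + 1))) ≤ (k : ℤ) := by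
          calc (∑ i ∈ Finset.range k, w₂ (rho i) (rho (i + 1)))
              ≤ ∑ _i ∈ Finset.range k, (1 : ℤ) := by
                refine Finset.sum_le_sum fun i _ => ?_
                cases hx : rho i <;> cases hy : rho (i + 1) <;>
                  simp [h00.2, h01.2, h10.2, h11.2]
            _ = (k : ℤ) := by simp
        have hk' : (0 : ℝ) < k := by exact_mod_cast hk
        rw [hu]
        simp only []
        rw [div_le_one hk']
        exact_mod_cast hb
    have hbdd : Filter.IsBoundedUnder (· ≤ ·) Filter.atTop u :=
      Filter.isBoundedUnder_of ⟨1, hub⟩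
    have hcb : Filter.IsCoboundedUnder (· ≥ ·) Filter.atTop u :=
      hbdd.isCoboundedUnder_ge
    have key : ∀ ε : ℝ, 0 < ε → ∀ᶠ k in Filter.atTop, -ε ≤ u k := by
      intro ε hε
      set Z₀ : ℕ := ⌈4 / ε⌉₊ + 3 with hZ₀
      refine Filter.eventually_atTop.2 ⟨S Z₀, fun k hk => ?_⟩
      obtain ⟨Z, r, hk', hr⟩ := exists_decomp k
      have hWZ : Z₀ ≤ Z + 1 := by
        by_contra hcon
        have h2 : Z + 2 ≤ Z₀ := by omega
        have hm := S_mono h2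
        have hs : S (Z + 2) = S (Z + 1) + 2 * (Z + 1) + 2 := S_succ (Z + 1) (by omega)
        omega
      have hk0 : 0 < k := by
        have h3 : S 3 ≤ S Z₀ := S_mono (by omega)
        have : S 3 = 10 := by simp [S]
        omega
      have hkR : (0 : ℝ) < k := by exact_mod_cast hk0
      have hsum := (sums h00 h11 h01 h10 Z r hr).2
      rw [← hk'] at hsum
      have he2 : -3 * ((Z : ℤ) + 1) - 1 ≤ e2 (Z + 1) r := by
        have := e2_ge (Z + 1) r
        push_cast at this ⊢
        linarith
      have hsumR : -3 * ((Z : ℝ) + 1) - 1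
          ≤ ((∑ i ∈ Finset.range k, w₂ (rho i) (rho (i + 1)) : ℤ) : ℝ) := by
        rw [hsum]
        exact_mod_cast he2
      have hZceil : (⌈4 / ε⌉₊ : ℝ) + 2 ≤ (Z : ℝ) := by
        have : ⌈4 / ε⌉₊ + 2 ≤ Z := by omega
        exact_mod_cast this
      have hceil : 4 / ε ≤ (⌈4 / ε⌉₊ : ℝ) := Nat.le_ceil _
      have h4Z : 4 ≤ ε * (Z : ℝ) := by
        have h1 : 4 / ε ≤ (Z : ℝ) := by linarith
        rw [div_le_iff₀ hε] at h1
        linarith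
      have hSW : (S (Z + 1) : ℝ) = (Z : ℝ) * ((Z : ℝ) + 3) := by
        have : S (Z + 1) = Z * (Z + 3) := by simp [S]
        rw [this]; push_cast; ring
      have hkS : (S (Z + 1) : ℝ) ≤ (k : ℝ) := by exact_mod_cast hk' ▸ Nat.le.intro rfl
      have hZ0 : (0 : ℝ) ≤ (Z : ℝ) := Nat.cast_nonneg Z
      have hεk : 3 * ((Z : ℝ) + 1) + 1 ≤ ε * k := by
        have hstep : 4 * ((Z : ℝ) + 3) ≤ ε * ((Z : ℝ) * ((Z : ℝ) + 3)) := by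
          nlinarith
        have h2 : ε * (S (Z + 1) : ℝ) ≤ ε * k := by
          exact mul_le_mul_of_nonneg_left hkS hε.le
        rw [hSW] at h2
        nlinarith
      rw [hu]
      simp only []
      rw [le_div_iff₀ hkR]
      nlinarith
    by_contra hL
    push_neg at hL
    have h2 := Filter.le_liminf_of_le hcb (key (-(Filter.atTop.liminf u) / 2) (by linarith))
    set L := Filter.atTop.liminf u
    have : -(-L / 2) = L / 2 := by ring
    rw [this] at h2
    linarith
  · -- not eventually periodic
    rintro ⟨p, n, hn, hper⟩
    have hmul : ∀ t k, p ≤ k → rho (k + t * n) = rho k := by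
      intro t
      induction t with
      | zero => intro k _; simp
      | succ t iht =>
        intro k hk
        have h1 : k + (t + 1) * n = (k + t * n) + n := by ring
        rw [h1, hper (k + t * n) (by omega), iht k hk]
    set Z : ℕ := p + n + 1 with hZ
    have hZ1 : 1 ≤ Z := by omega
    have hSp : p ≤ S Z := by
      have h1 : Z - 1 ≤ (Z - 1) * (Z + 2) := Nat.le_mul_of_pos_right _ (by omega)
      have : Z - 1 = p + n := by omega
      simp only [S]
      omega
    have hρ : ∀ i, i ≤ 2 * Z + 1 → rho (S Z + i) = decide (Z + 1 ≤ i) := fun i hi =>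
      rho_spec (posS' Z hZ1 i hi)
    set s : ℕ := (Z + 1) % n with hs
    set q : ℕ := (Z + 1) / n with hq
    have hdm : n * q + s = Z + 1 := Nat.div_add_mod (Z + 1) n
    have hsn : s < n := Nat.mod_lt _ (by omega)
    have h1 : S Z + (Z + 1) = (S Z + s) + q * n := by
      rw [mul_comm q n]; omega
    have h2 : rho (S Z + (Z + 1)) = rho (S Z + s) := by
      rw [h1]; exact hmul q (S Z + s) (by omega)
    have h3 : rho (S Z + (Z + 1)) = true := by
      rw [hρ (Z + 1) (by omega)]; simp
    have h4 : rho (S Z + s) = false := by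
      rw [hρ s (by omega)]; simp; omega
    rw [h2, h4] at h3
    exact Bool.false_ne_true h3
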